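/- (One-categorical Barr–Beck triangle theorem.) Let C, C', D be categories, and let U: C → C', G: C → D, G': C' → D be functors together with a natural isomorphism G ≅ U ⋙ G'. Assume: (1) G admits a left adjoint F and G' admits a left adjoint F'; (2) C admits coequalizers of reflexive pairs and G preserves them; (3) C' admits coequalizers of reflexive pairs and G' preserves them; (4) G and G' are conservative (reflect isomorphisms); (5) for every object d of D, the canonical map G'F'(d) → G'(U(F(d))) ≅ G(F(d)) — namely G' applied to the morphism F'(d) → U(F(d)) adjoint (under F' ⊣ G') to the unit d → G(F(d)) ≅ G'(U(F(d))) — is an isomorphism. Then U is an equivalence of categories. -/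

import Mathlib

open CategoryTheory Limits

/-! Universe-generalized copy of Mathlib's crude (reflexive) monadicity theorem,
since the Mathlib version assumes both categories have the same hom-universe. -/

namespace BarrBeckAux

universe v₁ v₂ u₁ u₂

open CategoryTheory CategoryTheory.Limits CategoryTheory.Monad

noncomputable section

variable {C : Type u₁} {D : Type u₂}
variable [Category.{v₁} C] [Category.{v₂} D]
variable {G : D ⥤ C} {F : C ⥤ D} (adj : F ⊣ G)

instance main_pair_reflexive (A : adj.toMonad.Algebra) :
    IsReflexivePair (F.map A.a) (adj.counit.app (F.obj A.A)) := by
  apply IsReflexivePair.mk' (F.map (adj.unit.app _)) _ _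
  · exact (F.map_comp _ _).symm.trans ((congr_arg F.map A.unit).trans (F.map_id _))
  · exact adj.left_triangle_components _

/-- The object function for the left adjoint to the comparison functor. -/
def comparisonLeftAdjointObj (A : adj.toMonad.Algebra)
    [HasCoequalizer (F.map A.a) (adj.counit.app _)] : D :=
  coequalizer (F.map A.a) (adj.counit.app _)

set_option linter.unusedVariables false in
/-- A bijection of homsets used to construct the left adjoint to the comparison functor. -/
@[simps!]
def comparisonLeftAdjointHomEquiv (A : adj.toMonad.Algebra) (B : D)
    [HasCoequalizer (F.map A.a) (adj.counit.app (F.obj A.A))] :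
    (comparisonLeftAdjointObj adj A ⟶ B) ≃ (A ⟶ (Monad.comparison adj).obj B) :=
  calc
    (comparisonLeftAdjointObj adj A ⟶ B) ≃ { f : F.obj A.A ⟶ B // _ } :=
      Cofork.IsColimit.homIso (colimit.isColimit _) B
    _ ≃ { g : A.A ⟶ G.obj B // G.map (F.map g) ≫ G.map (adj.counit.app B) = A.a ≫ g } := by
      refine (adj.homEquiv _ _).subtypeEquiv ?_
      intro f
      rw [← (adj.homEquiv _ _).injective.eq_iff, Adjunction.homEquiv_naturality_left,
        adj.homEquiv_unit, adj.homEquiv_unit]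
      erw [G.map_comp]
      dsimp
      erw [adj.right_triangle_components_assoc, ← G.map_comp, F.map_comp, Category.assoc,
        adj.counit_naturality, adj.left_triangle_components_assoc]
      apply eq_comm
    _ ≃ (A ⟶ (Monad.comparison adj).obj B) :=
      { toFun := fun g =>
          { f := _
            h := g.prop }
        invFun := fun f => ⟨f.f, f.h⟩
        left_inv := fun g => by ext; rfl
        right_inv := fun f => by ext; rfl }

/-- Construct the adjunction to the comparison functor. -/
def leftAdjointComparison
    [∀ A : adj.toMonad.Algebra, HasCoequalizer (F.map A.a)
      (adj.counit.app (F.obj A.A))] :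
    adj.toMonad.Algebra ⥤ D := by
  refine
    Adjunction.leftAdjointOfEquiv (G := Monad.comparison adj)
      (F_obj := fun A => comparisonLeftAdjointObj adj A) (fun A B => ?_) ?_
  · apply comparisonLeftAdjointHomEquiv
  · intro A B B' g h
    ext1
    simp [Cofork.IsColimit.homIso, Adjunction.homEquiv_unit]
    simp only [Trans.trans, Equiv.trans_apply, Equiv.subtypeEquiv_apply]
    erw [← Adjunction.homEquiv_naturality_right, Category.assoc]
    rfl

/-- Provided we have the appropriate coequalizers, we have an adjunction to the comparison
functor. -/
@[simps! counit]
def comparisonAdjunction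
    [∀ A : adj.toMonad.Algebra, HasCoequalizer (F.map A.a)
      (adj.counit.app (F.obj A.A))] :
    leftAdjointComparison adj ⊣ Monad.comparison adj :=
  Adjunction.adjunctionOfEquivLeft _ _

variable {adj}

theorem comparisonAdjunction_unit_f_aux
    [∀ A : adj.toMonad.Algebra, HasCoequalizer (F.map A.a)
      (adj.counit.app (F.obj A.A))]
    (A : adj.toMonad.Algebra) :
    ((comparisonAdjunction adj).unit.app A).f =
      adj.homEquiv A.A _
        (coequalizer.π (F.map A.a) (adj.counit.app (F.obj A.A))) :=
  congr_arg (adj.homEquiv _ _) (Category.comp_id _)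

/-- A cofork helpful for establishing monadicity. -/
@[simps! pt]
def unitCofork (A : adj.toMonad.Algebra)
    [HasCoequalizer (F.map A.a) (adj.counit.app (F.obj A.A))] :
    Cofork (G.map (F.map A.a)) (G.map (adj.counit.app (F.obj A.A))) :=
  Cofork.ofπ (G.map (coequalizer.π (F.map A.a) (adj.counit.app (F.obj A.A))))
    (by
      change _ = G.map _ ≫ _
      exact (G.map_comp _ _).symm.trans ((congr_arg G.map (coequalizer.condition _ _)).trans (G.map_comp _ _)))

@[simp]
theorem unitCofork_π (A : adj.toMonad.Algebra)
    [HasCoequalizer (F.map A.a) (adj.counit.app (F.obj A.A))] :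
    (unitCofork A).π = G.map (coequalizer.π (F.map A.a) (adj.counit.app (F.obj A.A))) :=
  rfl

theorem comparisonAdjunction_unit_f
    [∀ A : adj.toMonad.Algebra, HasCoequalizer (F.map A.a)
      (adj.counit.app (F.obj A.A))]
    (A : adj.toMonad.Algebra) :
    ((comparisonAdjunction adj).unit.app A).f = (beckCoequalizer A).desc (unitCofork A) := by
  apply Limits.Cofork.IsColimit.hom_ext (beckCoequalizer A)
  erw [Cofork.IsColimit.π_desc]
  dsimp only [beckCofork_π, unitCofork_π]
  erw [comparisonAdjunction_unit_f_aux, ← adj.homEquiv_naturality_left A.a, coequalizer.condition,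
    adj.homEquiv_naturality_right, adj.homEquiv_unit, Category.assoc]
  apply adj.right_triangle_components_assoc

variable (adj)

/-- The cofork describing the counit of the adjunction. -/
@[simps!]
def counitCofork (B : D) :
    Cofork (F.map (G.map (adj.counit.app B)))
      (adj.counit.app (F.obj (G.obj B))) :=
  Cofork.ofπ (adj.counit.app B) (adj.counit_naturality _)

variable {adj} in
/-- The unit cofork is a colimit provided `G` preserves it. -/
def unitColimitOfPreservesCoequalizer (A : adj.toMonad.Algebra)
    [HasCoequalizer (F.map A.a) (adj.counit.app (F.obj A.A))]
    [PreservesColimit (parallelPair (F.map A.a) (adj.counit.app (F.obj A.A))) G] :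
    IsColimit (unitCofork (G := G) A) :=
  isColimitOfHasCoequalizerOfPreservesColimit G _ _

/-- The counit cofork is a colimit provided `G` reflects it. -/
def counitCoequalizerOfReflectsCoequalizer (B : D)
    [ReflectsColimit (parallelPair (F.map (G.map (adj.counit.app B)))
      (adj.counit.app (F.obj (G.obj B)))) G] :
    IsColimit (counitCofork (adj := adj) B) :=
  isColimitOfIsColimitCoforkMap G _ (beckCoequalizer ((Monad.comparison adj).obj B))

instance
    [∀ A : adj.toMonad.Algebra, HasCoequalizer (F.map A.a) (adj.counit.app (F.obj A.A))]
    (B : D) : HasColimit (parallelPair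
      (F.map (G.map (NatTrans.app adj.counit B)))
      (NatTrans.app adj.counit (F.obj (G.obj B)))) :=
  inferInstanceAs <| HasCoequalizer
    (F.map ((Monad.comparison adj).obj B).a)
    (adj.counit.app (F.obj ((Monad.comparison adj).obj B).A))

theorem comparisonAdjunction_counit_app
    [∀ A : adj.toMonad.Algebra, HasCoequalizer (F.map A.a) (adj.counit.app (F.obj A.A))] (B : D) :
    (comparisonAdjunction adj).counit.app B = colimit.desc _ (counitCofork adj B) := by
  haveI := (‹∀ A : adj.toMonad.Algebra, HasCoequalizer (F.map A.a) (adj.counit.app (F.obj A.A))›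
    ((Monad.comparison adj).obj B))
  apply coequalizer.hom_ext
  erw [colimit.ι_desc, colimit.ι_desc]
  simp [Adjunction.homEquiv_counit]
  show (adj.homEquiv _ B).symm (𝟙 _) = adj.counit.app B
  simp [Adjunction.homEquiv_counit]

variable [HasReflexiveCoequalizers D] [G.ReflectsIsomorphisms]

/-- Universe-polymorphic version of `Monad.PreservesColimitOfIsReflexivePair`. -/
class PreservesReflexiveCoeq (G : D ⥤ C) : Prop where
  out : ∀ ⦃A B : D⦄ (f g : A ⟶ B) [IsReflexivePair f g],
    PreservesColimit (parallelPair f g) G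

instance {A B : D} (f g : A ⟶ B) [IsReflexivePair f g] [PreservesReflexiveCoeq G] :
    PreservesColimit (parallelPair f g) G := PreservesReflexiveCoeq.out f g

variable [PreservesReflexiveCoeq G]

instance : ∀ X : Monad.Algebra adj.toMonad,
    PreservesColimit (parallelPair (F.map X.a)
      (NatTrans.app adj.counit (F.obj X.A))) G :=
 fun _ => PreservesReflexiveCoeq.out _ _

/-- Reflexive (crude) monadicity theorem, universe-polymorphic version:
the comparison functor is an equivalence. -/
theorem comparison_isEquivalence : (Monad.comparison adj).IsEquivalence := by
  haveI : ∀ A : adj.toMonad.Algebra, HasCoequalizer (F.map A.a) (adj.counit.app (F.obj A.A)) :=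
    fun A => @HasReflexiveCoequalizers.has_coeq _ _ _ _ _ _ _ (main_pair_reflexive adj A)
  have : ∀ (X : Monad.Algebra adj.toMonad), IsIso ((comparisonAdjunction adj).unit.app X) := by
    intro X
    apply
      @isIso_of_reflects_iso _ _ _ _ _ _ _ (Monad.forget adj.toMonad) ?_ _
    · change IsIso ((comparisonAdjunction adj).unit.app X).f
      rw [comparisonAdjunction_unit_f]
      exact (IsColimit.coconePointUniqueUpToIso (beckCoequalizer X)
        (unitColimitOfPreservesCoequalizer X)).isIso_hom
  have : ∀ (Y : D), IsIso ((comparisonAdjunction adj).counit.app Y) := by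
    intro Y
    rw [comparisonAdjunction_counit_app]
    change IsIso (IsColimit.coconePointUniqueUpToIso _ ?_).hom
    infer_instance
    apply @counitCoequalizerOfReflectsCoequalizer _ _ _ _ _ _ _ _ ?_
    apply reflectsColimit_of_reflectsIsomorphisms
  exact (comparisonAdjunction adj).toEquivalence.isEquivalence_inverse

end

end BarrBeckAux

/-- STATEMENT 9 (one-categorical Barr–Beck triangle theorem): given functors
`U : C ⥤ C'`, `G : C ⥤ D`, `G' : C' ⥤ D` with `G ≅ U ⋙ G'`, such that `G, G'`
have left adjoints `F, F'`, the categories `C` and `C'` have coequalizers of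
reflexive pairs preserved by `G` resp. `G'`, `G` and `G'` are conservative, and
for each `d : D` the canonical comparison map `G'F'(d) → G'(UF(d)) ≅ G(F(d))`
(obtained by transposing the unit `d → GF(d)` across `F' ⊣ G'` and applying
`G'`) is an isomorphism — then `U` is an equivalence of categories. -/
theorem barr_beck_triangle
    {C : Type*} {C' : Type*} {D : Type*}
    [Category C] [Category C'] [Category D]
    (U : C ⥤ C') (G : C ⥤ D) (G' : C' ⥤ D) (iso : G ≅ U ⋙ G')
    (F : D ⥤ C) (adj : F ⊣ G) (F' : D ⥤ C') (adj' : F' ⊣ G')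
    (hC : ∀ {X Y : C} (f g : X ⟶ Y), IsReflexivePair f g →
      ∃ c : Cofork f g, Nonempty (IsColimit c))
    (hG : ∀ {X Y : C} (f g : X ⟶ Y), IsReflexivePair f g →
      ∀ c : Cofork f g, IsColimit c → Nonempty (IsColimit (G.mapCocone c)))
    (hC' : ∀ {X Y : C'} (f g : X ⟶ Y), IsReflexivePair f g →
      ∃ c : Cofork f g, Nonempty (IsColimit c))
    (hG' : ∀ {X Y : C'} (f g : X ⟶ Y), IsReflexivePair f g →
      ∀ c : Cofork f g, IsColimit c → Nonempty (IsColimit (G'.mapCocone c)))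
    (hGcons : ∀ {X Y : C} (f : X ⟶ Y), IsIso (G.map f) → IsIso f)
    (hG'cons : ∀ {X Y : C'} (f : X ⟶ Y), IsIso (G'.map f) → IsIso f)
    (hcomp : ∀ d : D, IsIso (G'.map
      ((adj'.homEquiv d (U.obj (F.obj d))).symm
        (adj.unit.app d ≫ iso.hom.app (F.obj d))))) :
    U.IsEquivalence := by
  -- set up the instances for crude monadicity
  haveI : HasReflexiveCoequalizers C := by
    constructor
    intro X Y f g hfg
    obtain ⟨c, ⟨hc⟩⟩ := hC f g hfg
    exact HasColimit.mk ⟨c, hc⟩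
  haveI : HasReflexiveCoequalizers C' := by
    constructor
    intro X Y f g hfg
    obtain ⟨c, ⟨hc⟩⟩ := hC' f g hfg
    exact HasColimit.mk ⟨c, hc⟩
  haveI : G.ReflectsIsomorphisms := ⟨fun f _ => hGcons f ‹_›⟩
  haveI : G'.ReflectsIsomorphisms := ⟨fun f _ => hG'cons f ‹_›⟩
  haveI : BarrBeckAux.PreservesReflexiveCoeq G := by
    constructor
    intro X Y f g hfg
    obtain ⟨c, ⟨hc⟩⟩ := hC f g hfg
    obtain ⟨hm⟩ := hG f g hfg c hc
    exact preservesColimit_of_preserves_colimit_cocone hc hm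
  haveI : BarrBeckAux.PreservesReflexiveCoeq G' := by
    constructor
    intro X Y f g hfg
    obtain ⟨c, ⟨hc⟩⟩ := hC' f g hfg
    obtain ⟨hm⟩ := hG' f g hfg c hc
    exact preservesColimit_of_preserves_colimit_cocone hc hm
  haveI e1 : (Monad.comparison adj).IsEquivalence := BarrBeckAux.comparison_isEquivalence adj
  haveI e2 : (Monad.comparison adj').IsEquivalence := BarrBeckAux.comparison_isEquivalence adj'
  -- naturality helpers for `iso`
  have isoHomNat : ∀ {X Y : C} (f : X ⟶ Y),
      G.map f ≫ iso.hom.app Y = iso.hom.app X ≫ G'.map (U.map f) := fun f =>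
    iso.hom.naturality f
  have isoInvNat : ∀ {X Y : C} (f : X ⟶ Y),
      G'.map (U.map f) ≫ iso.inv.app Y = iso.inv.app X ≫ G.map f := fun f =>
    iso.inv.naturality f
  -- the comparison natural transformation between the two adjunctions
  let σ : ∀ d : D, (F'.obj d ⟶ U.obj (F.obj d)) := fun d =>
    (adj'.homEquiv d (U.obj (F.obj d))).symm (adj.unit.app d ≫ iso.hom.app (F.obj d))
  have key : ∀ d : D, adj'.unit.app d ≫ G'.map (σ d)
      = adj.unit.app d ≫ iso.hom.app (F.obj d) := by
    intro d
    have := (adj'.homEquiv d (U.obj (F.obj d))).apply_symm_apply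
      (adj.unit.app d ≫ iso.hom.app (F.obj d))
    rwa [Adjunction.homEquiv_unit] at this
  have keyr : ∀ (d : D) {Z : D} (h : G'.obj (U.obj (F.obj d)) ⟶ Z),
      adj'.unit.app d ≫ G'.map (σ d) ≫ h
        = adj.unit.app d ≫ iso.hom.app (F.obj d) ≫ h := by
    intro d Z h
    rw [← Category.assoc, key, Category.assoc]
  have natσ : ∀ {d e : D} (k : d ⟶ e), F'.map k ≫ σ e = σ d ≫ U.map (F.map k) := by
    intro d e k
    apply (adj'.homEquiv _ _).injective
    rw [Adjunction.homEquiv_unit, Adjunction.homEquiv_unit]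
    simp only [Functor.map_comp, Category.assoc]
    rw [adj'.unit_naturality_assoc k, key e, keyr d, ← isoHomNat (F.map k),
      adj.unit_naturality_assoc k]
  -- the underlying morphism of the monad morphism
  let φ : ∀ d : D, (G'.obj (F'.obj d) ⟶ G.obj (F.obj d)) := fun d =>
    G'.map (σ d) ≫ iso.inv.app (F.obj d)
  have hφiso : ∀ d : D, IsIso (φ d) := by
    intro d
    have : IsIso (G'.map (σ d)) := hcomp d
    exact inferInstance
  have natφ : ∀ {d e : D} (k : d ⟶ e),
      G'.map (F'.map k) ≫ φ e = φ d ≫ G.map (F.map k) := by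
    intro d e k
    show G'.map (F'.map k) ≫ G'.map (σ e) ≫ iso.inv.app (F.obj e)
      = (G'.map (σ d) ≫ iso.inv.app (F.obj d)) ≫ G.map (F.map k)
    rw [← Category.assoc, ← G'.map_comp, natσ, G'.map_comp, Category.assoc,
      isoInvNat (F.map k), Category.assoc]
  have fη : ∀ d : D, adj'.unit.app d ≫ φ d = adj.unit.app d := by
    intro d
    show adj'.unit.app d ≫ G'.map (σ d) ≫ iso.inv.app (F.obj d) = adj.unit.app d
    rw [keyr d, iso.hom_inv_id_app]
    simp
  -- the C'-level μ-compatibility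
  have muC' : ∀ d : D, adj'.counit.app (F'.obj d) ≫ σ d
      = F'.map (φ d) ≫ σ (G.obj (F.obj d)) ≫ U.map (adj.counit.app (F.obj d)) := by
    intro d
    apply (adj'.homEquiv _ _).injective
    rw [Adjunction.homEquiv_unit, Adjunction.homEquiv_unit]
    simp only [Functor.map_comp, Category.assoc]
    have hh : iso.hom.app (F.obj (G.obj (F.obj d))) ≫
        G'.map (U.map (adj.counit.app (F.obj d)))
        = G.map (adj.counit.app (F.obj d)) ≫ iso.hom.app (F.obj d) :=
      (iso.hom.naturality (adj.counit.app (F.obj d))).symm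
    rw [adj'.right_triangle_components_assoc, adj'.unit_naturality_assoc (φ d),
      keyr (G.obj (F.obj d)), hh, adj.right_triangle_components_assoc]
    show G'.map (σ d) = (G'.map (σ d) ≫ iso.inv.app (F.obj d)) ≫ iso.hom.app (F.obj d)
    simp
  have fμ : ∀ d : D, G'.map (adj'.counit.app (F'.obj d)) ≫ φ d
      = (G'.map (F'.map (φ d)) ≫ φ (G.obj (F.obj d))) ≫ G.map (adj.counit.app (F.obj d)) := by
    intro d
    show G'.map (adj'.counit.app (F'.obj d)) ≫ G'.map (σ d) ≫ iso.inv.app (F.obj d)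
      = (G'.map (F'.map (φ d)) ≫ G'.map (σ (G.obj (F.obj d)))
          ≫ iso.inv.app (F.obj (G.obj (F.obj d)))) ≫ G.map (adj.counit.app (F.obj d))
    have hh : iso.inv.app (F.obj (G.obj (F.obj d))) ≫ G.map (adj.counit.app (F.obj d))
        = G'.map (U.map (adj.counit.app (F.obj d))) ≫ iso.inv.app (F.obj d) :=
      (iso.inv.naturality (adj.counit.app (F.obj d))).symm
    rw [← G'.map_comp_assoc, muC' d]
    simp only [Functor.map_comp, Category.assoc]
    rw [hh]
  -- the monad isomorphism
  let monadIso : adj'.toMonad ≅ adj.toMonad :=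
    MonadIso.mk
      (NatIso.ofComponents (fun d => @asIso _ _ _ _ (φ d) (hφiso d)) (fun k => natφ k))
      (fun d => fη d) (fun d => fμ d)
  let E := Monad.algebraEquivOfIsoMonads monadIso.symm
  let A : Monad.Algebra adj.toMonad ⥤ Monad.Algebra adj'.toMonad := E.functor
  haveI : A.IsEquivalence := E.isEquivalence_functor
  -- the C'-level square for the comparison triangle
  have sqC' : ∀ X : C, F'.map (iso.hom.app X) ≫ adj'.counit.app (U.obj X)
      = σ (G.obj X) ≫ U.map (adj.counit.app X) := by
    intro X
    apply (adj'.homEquiv _ _).injective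
    rw [Adjunction.homEquiv_unit, Adjunction.homEquiv_unit]
    simp only [Functor.map_comp, Category.assoc]
    have hh1 : adj'.unit.app ((U ⋙ G').obj X) ≫ G'.map (adj'.counit.app (U.obj X))
        = 𝟙 _ := adj'.right_triangle_components (U.obj X)
    have hh2 : iso.hom.app (F.obj (G.obj X)) ≫ G'.map (U.map (adj.counit.app X))
        = G.map (adj.counit.app X) ≫ iso.hom.app X :=
      (iso.hom.naturality (adj.counit.app X)).symm
    rw [adj'.unit_naturality_assoc (iso.hom.app X), hh1,
      keyr (G.obj X), hh2, adj.right_triangle_components_assoc]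
    simp
  have sqD : ∀ X : C,
      G'.map (F'.map (iso.hom.app X)) ≫ G'.map (adj'.counit.app (U.obj X))
        = ((G'.map (σ (G.obj X)) ≫ iso.inv.app (F.obj (G.obj X))) ≫
            G.map (adj.counit.app X)) ≫ iso.hom.app X := by
    intro X
    have hh : iso.inv.app (F.obj (G.obj X)) ≫ G.map (adj.counit.app X)
        = G'.map (U.map (adj.counit.app X)) ≫ iso.inv.app X :=
      (iso.inv.naturality (adj.counit.app X)).symm
    simp only [Category.assoc]
    rw [reassoc_of% hh]
    simp only [Category.assoc, iso.inv_hom_id_app]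
    rw [← G'.map_comp, sqC' X]
    simp [G'.map_comp]
  -- the comparison triangle commutes up to natural isomorphism
  have compIso : Monad.comparison adj ⋙ A ≅ U ⋙ Monad.comparison adj' := by
    refine NatIso.ofComponents (fun X => Monad.Algebra.isoMk (iso.app X) ?_)
      (fun {X Y} k => ?_)
    · exact sqD X
    · ext
      show G.map k ≫ iso.hom.app Y = iso.hom.app X ≫ G'.map (U.map k)
      exact iso.hom.naturality k
  haveI : (Monad.comparison adj ⋙ A).IsEquivalence := Functor.isEquivalence_trans _ _
  haveI : (U ⋙ Monad.comparison adj').IsEquivalence :=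
    Functor.isEquivalence_of_iso compIso
  exact Functor.isEquivalence_of_comp_right U (Monad.comparison adj')
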